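/- Let Ω be a finite set equipped with a symmetric neighbor relation ~ under which Ω is connected, and let d be a path metric compatible with ~, i.e. d(x,y) ≥ 1 whenever x ≠ y and d(x,y) = min over all neighbor-to-neighbor paths x = x₀ ~ x₁ ~ … ~ x_r = y of Σ_{i=1}^r d(x_{i−1}, x_i). Let P be a stochastic matrix on Ω with stationary distribution π. Suppose that for every neighboring pair x ~ y there exists a coupling Q_{x,y} of P(x,·) and P(y,·) (a probability distribution on Ω × Ω whose first marginal is P(x,·) and second marginal is P(y,·)) such that E_{Q_{x,y}}[d(X′,Y′)] ≤ (1 − δ) d(x,y), where δ ∈ (0,1) does not depend on x and y. Then for every t ≥ 0, max_{x∈Ω} ‖P^t(x,·) − π‖_TV ≤ (1 − δ)^t diam(Ω), where diam(Ω) = max_{x,y} d(x,y); consequently the mixing time satisfies t_mix(ε) = min{t : max_x ‖P^t(x,·) − π‖_TV ≤ ε} ≤ ⌈(log diam(Ω) − log ε)/δ⌉ for every ε ∈ (0,1). -/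
import Mathlib

open Filter

section PathCouplingHelpers

open Finset

private lemma sum3_swap {α : Type*} [Fintype α] (f : α → α → α → ℝ) :
    ∑ a, ∑ b, ∑ c, f a b c = ∑ b, ∑ c, ∑ a, f a b c := by
  rw [Finset.sum_comm]
  exact Finset.sum_congr rfl fun b _ => Finset.sum_comm

private lemma sum4_swap {α : Type*} [Fintype α] (f : α → α → α → α → ℝ) :
    ∑ a, ∑ b, ∑ c, ∑ e, f a b c e = ∑ c, ∑ e, ∑ a, ∑ b, f a b c e := by
  calc ∑ a, ∑ b, ∑ c, ∑ e, f a b c e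
      = ∑ a, ∑ c, ∑ b, ∑ e, f a b c e :=
        Finset.sum_congr rfl (fun a _ => Finset.sum_comm)
    _ = ∑ c, ∑ a, ∑ b, ∑ e, f a b c e := Finset.sum_comm
    _ = ∑ c, ∑ a, ∑ e, ∑ b, f a b c e :=
        Finset.sum_congr rfl (fun c _ => Finset.sum_congr rfl (fun a _ => Finset.sum_comm))
    _ = ∑ c, ∑ e, ∑ a, ∑ b, f a b c e :=
        Finset.sum_congr rfl (fun c _ => Finset.sum_comm)

private lemma glue_coupling {α : Type*} [Fintype α] (d : α → α → ℝ)
    (hd0 : ∀ x y, 0 ≤ d x y) (htri : ∀ x y z, d x z ≤ d x y + d y z)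
    (μ ν ρ : α → ℝ) (Q1 Q2 : α → α → ℝ)
    (h1n : ∀ a b, 0 ≤ Q1 a b) (h2n : ∀ a b, 0 ≤ Q2 a b)
    (h1a : ∀ a, ∑ b, Q1 a b = μ a) (h1b : ∀ b, ∑ a, Q1 a b = ν b)
    (h2a : ∀ b, ∑ c, Q2 b c = ν b) (h2c : ∀ c, ∑ b, Q2 b c = ρ c) :
    ∃ Q : α → α → ℝ, (∀ a c, 0 ≤ Q a c) ∧ (∀ a, ∑ c, Q a c = μ a) ∧
      (∀ c, ∑ a, Q a c = ρ c) ∧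
      ∑ a, ∑ c, Q a c * d a c ≤ (∑ a, ∑ b, Q1 a b * d a b) + ∑ b, ∑ c, Q2 b c * d b c := by
  have hν : ∀ b, 0 ≤ ν b := fun b => (h1b b) ▸ Finset.sum_nonneg fun a _ => h1n a b
  have hz1 : ∀ a b, ν b = 0 → Q1 a b = 0 := by
    intro a b hb
    have := (Finset.sum_eq_zero_iff_of_nonneg (fun a _ => h1n a b)).mp ((h1b b).trans hb)
    exact this a (Finset.mem_univ a)
  have hz2 : ∀ b c, ν b = 0 → Q2 b c = 0 := by
    intro b c hb
    have := (Finset.sum_eq_zero_iff_of_nonneg (fun c _ => h2n b c)).mp ((h2a b).trans hb)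
    exact this c (Finset.mem_univ c)
  refine ⟨fun a c => ∑ b, Q1 a b * Q2 b c / ν b, ?_, ?_, ?_, ?_⟩
  · intro a c
    exact Finset.sum_nonneg fun b _ => div_nonneg (mul_nonneg (h1n a b) (h2n b c)) (hν b)
  · intro a
    calc ∑ c, ∑ b, Q1 a b * Q2 b c / ν b
        = ∑ b, ∑ c, Q1 a b * Q2 b c / ν b := Finset.sum_comm
      _ = ∑ b, Q1 a b := by
          refine Finset.sum_congr rfl fun b _ => ?_
          by_cases hb : ν b = 0
          · simp [hz1 a b hb]
          · have e : ∑ c, Q1 a b * Q2 b c / ν b = Q1 a b * (∑ c, Q2 b c) / ν b := by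
              rw [Finset.mul_sum, Finset.sum_div]
            rw [e, h2a, mul_div_assoc, div_self hb, mul_one]
      _ = μ a := h1a a
  · intro c
    calc ∑ a, ∑ b, Q1 a b * Q2 b c / ν b
        = ∑ b, ∑ a, Q1 a b * Q2 b c / ν b := Finset.sum_comm
      _ = ∑ b, Q2 b c := by
          refine Finset.sum_congr rfl fun b _ => ?_
          by_cases hb : ν b = 0
          · simp [hz2 b c hb]
          · have e : ∑ a, Q1 a b * Q2 b c / ν b = (∑ a, Q1 a b) * Q2 b c / ν b := by
              rw [Finset.sum_mul, Finset.sum_div]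
            rw [e, h1b, mul_comm (ν b) (Q2 b c), mul_div_assoc, div_self hb, mul_one]
      _ = ρ c := h2c c
  · calc ∑ a, ∑ c, (∑ b, Q1 a b * Q2 b c / ν b) * d a c
        = ∑ a, ∑ c, ∑ b, Q1 a b * Q2 b c / ν b * d a c := by simp_rw [Finset.sum_mul]
      _ ≤ ∑ a, ∑ c, ∑ b, Q1 a b * Q2 b c / ν b * (d a b + d b c) := by
          refine Finset.sum_le_sum fun a _ => Finset.sum_le_sum fun c _ =>
            Finset.sum_le_sum fun b _ => ?_
          exact mul_le_mul_of_nonneg_left (htri a b c)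
            (div_nonneg (mul_nonneg (h1n a b) (h2n b c)) (hν b))
      _ = (∑ a, ∑ c, ∑ b, Q1 a b * Q2 b c / ν b * d a b)
          + ∑ a, ∑ c, ∑ b, Q1 a b * Q2 b c / ν b * d b c := by
          simp_rw [mul_add, Finset.sum_add_distrib]
      _ = (∑ a, ∑ b, Q1 a b * d a b) + ∑ b, ∑ c, Q2 b c * d b c := by
          congr 1
          · calc ∑ a, ∑ c, ∑ b, Q1 a b * Q2 b c / ν b * d a b
                = ∑ a, ∑ b, ∑ c, Q1 a b * Q2 b c / ν b * d a b :=
                  Finset.sum_congr rfl fun a _ => Finset.sum_comm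
              _ = ∑ a, ∑ b, Q1 a b * d a b := by
                  refine Finset.sum_congr rfl fun a _ => Finset.sum_congr rfl fun b _ => ?_
                  by_cases hb : ν b = 0
                  · simp [hz1 a b hb]
                  · have e : ∑ c, Q1 a b * Q2 b c / ν b * d a b
                        = Q1 a b * (∑ c, Q2 b c) / ν b * d a b := by
                      rw [Finset.mul_sum, Finset.sum_div, Finset.sum_mul]
                    rw [e, h2a, mul_div_assoc, div_self hb, mul_one]
          · calc ∑ a, ∑ c, ∑ b, Q1 a b * Q2 b c / ν b * d b c
                = ∑ c, ∑ b, ∑ a, Q1 a b * Q2 b c / ν b * d b c := sum3_swap _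
              _ = ∑ c, ∑ b, Q2 b c * d b c := by
                  refine Finset.sum_congr rfl fun c _ => Finset.sum_congr rfl fun b _ => ?_
                  by_cases hb : ν b = 0
                  · simp [hz2 b c hb]
                  · have e : ∑ a, Q1 a b * Q2 b c / ν b * d b c
                        = (∑ a, Q1 a b) * Q2 b c / ν b * d b c := by
                      rw [Finset.sum_mul, Finset.sum_div, Finset.sum_mul]
                    rw [e, h1b, mul_comm (ν b) (Q2 b c), mul_div_assoc, div_self hb, mul_one]
              _ = ∑ b, ∑ c, Q2 b c * d b c := Finset.sum_comm

private lemma tv_le_coupling {α : Type*} [Fintype α] [DecidableEq α] (d : α → α → ℝ)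
    (hd0 : ∀ x y, 0 ≤ d x y) (hd1 : ∀ x y : α, x ≠ y → 1 ≤ d x y)
    (μ ν : α → ℝ) (S : α → α → ℝ) (hS0 : ∀ a b, 0 ≤ S a b)
    (hSμ : ∀ a, ∑ b, S a b = μ a) (hSν : ∀ b, ∑ a, S a b = ν b) :
    (1 / 2) * ∑ b, |μ b - ν b| ≤ ∑ a, ∑ b, S a b * d a b := by
  have hsum : ∑ a, μ a = ∑ b, ν b := by
    calc ∑ a, μ a = ∑ a, ∑ b, S a b := Finset.sum_congr rfl fun a _ => (hSμ a).symm
      _ = ∑ b, ∑ a, S a b := Finset.sum_comm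
      _ = ∑ b, ν b := Finset.sum_congr rfl fun b _ => hSν b
  have habs : ∀ u : ℝ, |u| = 2 * max u 0 - u := by
    intro u; rcases le_total 0 u with h | h
    · rw [abs_of_nonneg h, max_eq_left h]; ring
    · rw [abs_of_nonpos h, max_eq_right h]; ring
  have h1 : ∑ b, |μ b - ν b| = 2 * ∑ b, max (μ b - ν b) 0 := by
    simp_rw [habs]
    rw [Finset.sum_sub_distrib, ← Finset.mul_sum, Finset.sum_sub_distrib, hsum, sub_self,
      sub_zero]
  rw [h1, show (1 / 2 : ℝ) * (2 * ∑ b, max (μ b - ν b) 0) = ∑ b, max (μ b - ν b) 0 by ring]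
  refine Finset.sum_le_sum fun a _ => ?_
  refine max_le ?_ (Finset.sum_nonneg fun b _ => mul_nonneg (hS0 a b) (hd0 a b))
  have e1 : S a a + ∑ b ∈ Finset.univ.erase a, S a b = μ a := by
    rw [Finset.add_sum_erase _ (fun b => S a b) (Finset.mem_univ a), hSμ]
  have e2 : S a a ≤ ν a := by
    rw [← hSν a]; exact Finset.single_le_sum (fun c _ => hS0 c a) (Finset.mem_univ a)
  have h3 : ∑ b ∈ Finset.univ.erase a, S a b ≤ ∑ b ∈ Finset.univ.erase a, S a b * d a b := by
    refine Finset.sum_le_sum fun b hb => ?_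
    exact le_mul_of_one_le_right (hS0 a b) (hd1 a b (Finset.ne_of_mem_erase hb).symm)
  have h4 : ∑ b ∈ Finset.univ.erase a, S a b * d a b ≤ ∑ b, S a b * d a b :=
    Finset.sum_le_sum_of_subset_of_nonneg (Finset.subset_univ _)
      (fun b _ _ => mul_nonneg (hS0 a b) (hd0 a b))
  linarith

end PathCouplingHelpers

/-- **Path coupling (Bubley–Dyer).**  Let `Ω` be a finite set with a symmetric,
connected neighbor relation `N` and a compatible path metric `d` (so `d x y ≥ 1`
for `x ≠ y`, and `d x y` is the minimum over neighbor-to-neighbor paths of the sum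
of the step distances).  If `P` is a stochastic matrix with stationary distribution
`π`, and for every neighboring pair there is a coupling of the one-step
distributions whose mean distance contracts by a factor `1 - δ`, then
`max_x ‖P^t(x,·) − π‖_TV ≤ (1-δ)^t · diam Ω`, and consequently
`t_mix(ε) ≤ ⌈(log diam Ω − log ε)/δ⌉`. -/
theorem path_coupling_theorem
    {Ω : Type*} [Fintype Ω] [DecidableEq Ω] [Nonempty Ω]
    (N : Ω → Ω → Prop) (hsym : Symmetric N)
    (d : Ω → Ω → ℝ)
    (hd_self : ∀ x, d x x = 0)
    (hd_symm : ∀ x y, d x y = d y x)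
    (hd_tri : ∀ x y z, d x z ≤ d x y + d y z)
    (hd_one : ∀ x y : Ω, x ≠ y → 1 ≤ d x y)
    -- `d` is a path metric: some neighbor-to-neighbor path realizes `d x y` ...
    (hpath : ∀ x y : Ω, ∃ (r : ℕ) (p : ℕ → Ω), p 0 = x ∧ p r = y ∧
        (∀ i < r, N (p i) (p (i + 1))) ∧
        d x y = ∑ i ∈ Finset.range r, d (p i) (p (i + 1)))
    -- ... and every neighbor-to-neighbor path dominates `d x y`
    (hmin : ∀ x y : Ω, ∀ (r : ℕ) (p : ℕ → Ω), p 0 = x → p r = y →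
        (∀ i < r, N (p i) (p (i + 1))) →
        d x y ≤ ∑ i ∈ Finset.range r, d (p i) (p (i + 1)))
    (P : Matrix Ω Ω ℝ)
    (hP_nonneg : ∀ x y, 0 ≤ P x y) (hP_row : ∀ x, ∑ y, P x y = 1)
    (π : Ω → ℝ) (hπ_nonneg : ∀ x, 0 ≤ π x) (hπ_sum : ∑ x, π x = 1)
    (hπ_stat : ∀ y, ∑ x, π x * P x y = π y)
    (δ : ℝ) (hδ : δ ∈ Set.Ioo (0 : ℝ) 1)
    -- coupling of `P(x,·)` and `P(y,·)` with mean contraction for every neighboring pair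
    (hcoupling : ∀ x y : Ω, N x y → ∃ Q : Ω → Ω → ℝ,
        (∀ a b, 0 ≤ Q a b) ∧
        (∀ a, ∑ b, Q a b = P x a) ∧
        (∀ b, ∑ a, Q a b = P y b) ∧
        ∑ a, ∑ b, Q a b * d a b ≤ (1 - δ) * d x y) :
    (∀ t : ℕ, ∀ x : Ω,
        (1 / 2) * ∑ y, |(P ^ t) x y - π y| ≤ (1 - δ) ^ t * (⨆ x, ⨆ y, d x y)) ∧
    (∀ ε : ℝ, ε ∈ Set.Ioo (0 : ℝ) 1 →
        sInf {t : ℕ | ∀ x : Ω, (1 / 2) * ∑ y, |(P ^ t) x y - π y| ≤ ε}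
          ≤ ⌈(Real.log (⨆ x, ⨆ y, d x y) - Real.log ε) / δ⌉₊) := by
  obtain ⟨hδ0, hδ1⟩ := hδ
  set D : ℝ := ⨆ x, ⨆ y, d x y with hD
  -- basic facts about d and D
  have hd0 : ∀ x y, 0 ≤ d x y := by
    intro x y
    by_cases h : x = y
    · subst h; rw [hd_self]
    · linarith [hd_one x y h]
  have hbdd : ∀ x y, d x y ≤ D := by
    intro x y
    refine le_trans (le_ciSup (Set.Finite.bddAbove (Set.finite_range (d x))) y) ?_
    exact le_ciSup (Set.Finite.bddAbove (Set.finite_range fun x => ⨆ y, d x y)) x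
  have hD0 : 0 ≤ D := by
    have := hbdd (Classical.arbitrary Ω) (Classical.arbitrary Ω)
    rwa [hd_self] at this
  have h1δ : 0 ≤ 1 - δ := by linarith
  -- one-step coupling for arbitrary pairs, via paths
  have chain : ∀ r : ℕ, ∀ p : ℕ → Ω, (∀ i < r, N (p i) (p (i + 1))) →
      ∃ Q : Ω → Ω → ℝ, (∀ a b, 0 ≤ Q a b) ∧ (∀ a, ∑ b, Q a b = P (p 0) a) ∧
        (∀ b, ∑ a, Q a b = P (p r) b) ∧
        ∑ a, ∑ b, Q a b * d a b ≤ (1 - δ) * ∑ i ∈ Finset.range r, d (p i) (p (i + 1)) := by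
    intro r
    induction r with
    | zero =>
        intro p _
        refine ⟨fun a b => if a = b then P (p 0) a else 0, ?_, ?_, ?_, ?_⟩
        · intro a b; dsimp only; split
          · exact hP_nonneg _ _
          · exact le_rfl
        · intro a; simp
        · intro b; simp
        · simp [hd_self]
    | succ r ih =>
        intro p hp
        obtain ⟨Q1, h1n, h1a, h1b, h1E⟩ := ih p (fun i hi => hp i (Nat.lt_succ_of_lt hi))
        obtain ⟨Q2, h2n, h2a, h2c, h2E⟩ := hcoupling (p r) (p (r + 1)) (hp r (Nat.lt_succ_self r))
        obtain ⟨Q, hn, ha, hc, hE⟩ := glue_coupling d hd0 hd_tri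
          (P (p 0)) (P (p r)) (P (p (r + 1))) Q1 Q2 h1n h2n h1a h1b h2a h2c
        refine ⟨Q, hn, ha, hc, ?_⟩
        calc ∑ a, ∑ c, Q a c * d a c
            ≤ (∑ a, ∑ b, Q1 a b * d a b) + ∑ b, ∑ c, Q2 b c * d b c := hE
          _ ≤ (1 - δ) * (∑ i ∈ Finset.range r, d (p i) (p (i + 1))) + (1 - δ) * d (p r) (p (r + 1)) := by
              exact add_le_add h1E h2E
          _ = (1 - δ) * ∑ i ∈ Finset.range (r + 1), d (p i) (p (i + 1)) := by
              rw [Finset.sum_range_succ]; ring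
  have key1 : ∀ x y : Ω, ∃ Q : Ω → Ω → ℝ, (∀ a b, 0 ≤ Q a b) ∧
      (∀ a, ∑ b, Q a b = P x a) ∧ (∀ b, ∑ a, Q a b = P y b) ∧
      ∑ a, ∑ b, Q a b * d a b ≤ (1 - δ) * d x y := by
    intro x y
    obtain ⟨r, p, hp0, hpr, hpN, hpd⟩ := hpath x y
    obtain ⟨Q, hn, ha, hc, hE⟩ := chain r p hpN
    rw [hp0] at ha; rw [hpr] at hc
    exact ⟨Q, hn, ha, hc, by rw [hpd]; exact hE⟩
  -- t-step couplings
  have keyt : ∀ t : ℕ, ∀ x y : Ω, ∃ C : Ω → Ω → ℝ, (∀ a b, 0 ≤ C a b) ∧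
      (∀ a, ∑ b, C a b = (P ^ t) x a) ∧ (∀ b, ∑ a, C a b = (P ^ t) y b) ∧
      ∑ a, ∑ b, C a b * d a b ≤ (1 - δ) ^ t * d x y := by
    intro t
    induction t with
    | zero =>
        intro x y
        refine ⟨fun a b => (if x = a then (1 : ℝ) else 0) * (if y = b then (1 : ℝ) else 0),
          ?_, ?_, ?_, ?_⟩
        · intro a b; positivity
        · intro a; rw [← Finset.mul_sum]
          simp [pow_zero, Matrix.one_apply]
        · intro b; rw [← Finset.sum_mul]
          simp [pow_zero, Matrix.one_apply]
        · refine le_of_eq ?_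
          simp [ite_mul, one_mul, zero_mul, Finset.sum_ite_eq]
    | succ t ih =>
        choose C hC0 hC1 hC2 hC3 using ih
        intro x y
        obtain ⟨Q, hQ0, hQ1, hQ2, hQ3⟩ := key1 x y
        refine ⟨fun a' b' => ∑ a, ∑ b, Q a b * C a b a' b', ?_, ?_, ?_, ?_⟩
        · intro a' b'
          exact Finset.sum_nonneg fun a _ => Finset.sum_nonneg fun b _ =>
            mul_nonneg (hQ0 a b) (hC0 a b a' b')
        · intro a'
          calc ∑ b', ∑ a, ∑ b, Q a b * C a b a' b'
              = ∑ a, ∑ b, ∑ b', Q a b * C a b a' b' := sum3_swap _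
            _ = ∑ a, ∑ b, Q a b * (P ^ t) a a' := by
                refine Finset.sum_congr rfl fun a _ => Finset.sum_congr rfl fun b _ => ?_
                rw [← Finset.mul_sum, hC1 a b a']
            _ = ∑ a, P x a * (P ^ t) a a' := by
                refine Finset.sum_congr rfl fun a _ => ?_
                rw [← Finset.sum_mul, hQ1 a]
            _ = (P ^ (t + 1)) x a' := by rw [pow_succ', Matrix.mul_apply]
        · intro b'
          calc ∑ a', ∑ a, ∑ b, Q a b * C a b a' b'
              = ∑ a, ∑ b, ∑ a', Q a b * C a b a' b' := sum3_swap _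
            _ = ∑ a, ∑ b, Q a b * (P ^ t) b b' := by
                refine Finset.sum_congr rfl fun a _ => Finset.sum_congr rfl fun b _ => ?_
                rw [← Finset.mul_sum, hC2 a b b']
            _ = ∑ b, ∑ a, Q a b * (P ^ t) b b' := Finset.sum_comm
            _ = ∑ b, P y b * (P ^ t) b b' := by
                refine Finset.sum_congr rfl fun b _ => ?_
                rw [← Finset.sum_mul, hQ2 b]
            _ = (P ^ (t + 1)) y b' := by rw [pow_succ', Matrix.mul_apply]
        · calc ∑ a', ∑ b', (∑ a, ∑ b, Q a b * C a b a' b') * d a' b'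
              = ∑ a', ∑ b', ∑ a, ∑ b, Q a b * C a b a' b' * d a' b' := by
                refine Finset.sum_congr rfl fun a' _ => Finset.sum_congr rfl fun b' _ => ?_
                rw [Finset.sum_mul]
                exact Finset.sum_congr rfl fun a _ => Finset.sum_mul _ _ _
            _ = ∑ a, ∑ b, ∑ a', ∑ b', Q a b * C a b a' b' * d a' b' := sum4_swap _
            _ = ∑ a, ∑ b, Q a b * (∑ a', ∑ b', C a b a' b' * d a' b') := by
                refine Finset.sum_congr rfl fun a _ => Finset.sum_congr rfl fun b _ => ?_
                rw [Finset.mul_sum]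
                refine Finset.sum_congr rfl fun a' _ => ?_
                rw [Finset.mul_sum]
                exact Finset.sum_congr rfl fun b' _ => by ring
            _ ≤ ∑ a, ∑ b, Q a b * ((1 - δ) ^ t * d a b) := by
                refine Finset.sum_le_sum fun a _ => Finset.sum_le_sum fun b _ => ?_
                exact mul_le_mul_of_nonneg_left (hC3 a b) (hQ0 a b)
            _ = (1 - δ) ^ t * ∑ a, ∑ b, Q a b * d a b := by
                rw [Finset.mul_sum]
                refine Finset.sum_congr rfl fun a _ => ?_
                rw [Finset.mul_sum]
                exact Finset.sum_congr rfl fun b _ => by ring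
            _ ≤ (1 - δ) ^ t * ((1 - δ) * d x y) :=
                mul_le_mul_of_nonneg_left hQ3 (pow_nonneg h1δ t)
            _ = (1 - δ) ^ (t + 1) * d x y := by ring
  -- stationarity for P^t
  have hstat_t : ∀ t : ℕ, ∀ b : Ω, ∑ y, π y * (P ^ t) y b = π b := by
    intro t
    induction t with
    | zero =>
        intro b
        simp [Matrix.one_apply, Finset.sum_ite_eq', mul_comm]
    | succ t ih =>
        intro b
        calc ∑ y, π y * (P ^ (t + 1)) y b
            = ∑ y, ∑ z, π y * ((P ^ t) y z * P z b) := by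
              refine Finset.sum_congr rfl fun y _ => ?_
              rw [pow_succ, Matrix.mul_apply, Finset.mul_sum]
          _ = ∑ z, ∑ y, π y * ((P ^ t) y z * P z b) := Finset.sum_comm
          _ = ∑ z, (∑ y, π y * (P ^ t) y z) * P z b := by
              refine Finset.sum_congr rfl fun z _ => ?_
              rw [Finset.sum_mul]
              exact Finset.sum_congr rfl fun y _ => by ring
          _ = ∑ z, π z * P z b := by
              refine Finset.sum_congr rfl fun z _ => ?_
              rw [ih z]
          _ = π b := hπ_stat b
  -- Part 1
  have part1 : ∀ t : ℕ, ∀ x : Ω,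
      (1 / 2) * ∑ y, |(P ^ t) x y - π y| ≤ (1 - δ) ^ t * D := by
    intro t x
    choose C hC0 hC1 hC2 hC3 using keyt t
    have hS0 : ∀ a b, 0 ≤ ∑ y, π y * C x y a b := fun a b =>
      Finset.sum_nonneg fun y _ => mul_nonneg (hπ_nonneg y) (hC0 x y a b)
    have hSμ : ∀ a, ∑ b, ∑ y, π y * C x y a b = (P ^ t) x a := by
      intro a
      rw [Finset.sum_comm]
      calc ∑ y, ∑ b, π y * C x y a b = ∑ y, π y * (P ^ t) x a := by
            refine Finset.sum_congr rfl fun y _ => ?_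
            rw [← Finset.mul_sum, hC1 x y a]
        _ = (P ^ t) x a := by rw [← Finset.sum_mul, hπ_sum, one_mul]
    have hSν : ∀ b, ∑ a, ∑ y, π y * C x y a b = π b := by
      intro b
      rw [Finset.sum_comm]
      calc ∑ y, ∑ a, π y * C x y a b = ∑ y, π y * (P ^ t) y b := by
            refine Finset.sum_congr rfl fun y _ => ?_
            rw [← Finset.mul_sum, hC2 x y b]
        _ = π b := hstat_t t b
    have hSE : ∑ a, ∑ b, (∑ y, π y * C x y a b) * d a b ≤ (1 - δ) ^ t * D := by
      calc ∑ a, ∑ b, (∑ y, π y * C x y a b) * d a b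
          = ∑ a, ∑ b, ∑ y, π y * C x y a b * d a b := by
            refine Finset.sum_congr rfl fun a _ => Finset.sum_congr rfl fun b _ =>
              Finset.sum_mul _ _ _
        _ = ∑ y, ∑ a, ∑ b, π y * C x y a b * d a b := (sum3_swap _).trans (sum3_swap _)
        _ ≤ ∑ y, π y * ((1 - δ) ^ t * D) := by
            refine Finset.sum_le_sum fun y _ => ?_
            have e : ∑ a, ∑ b, π y * C x y a b * d a b
                = π y * ∑ a, ∑ b, C x y a b * d a b := by
              rw [Finset.mul_sum]
              refine Finset.sum_congr rfl fun a _ => ?_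
              rw [Finset.mul_sum]
              exact Finset.sum_congr rfl fun b _ => by ring
            rw [e]
            refine mul_le_mul_of_nonneg_left ?_ (hπ_nonneg y)
            exact le_trans (hC3 x y)
              (mul_le_mul_of_nonneg_left (hbdd x y) (pow_nonneg h1δ t))
        _ = (1 - δ) ^ t * D := by rw [← Finset.sum_mul, hπ_sum, one_mul]
    exact le_trans
      (tv_le_coupling d hd0 hd_one ((P ^ t) x) π (fun a b => ∑ y, π y * C x y a b)
        hS0 hSμ hSν) hSE
  refine ⟨fun t x => part1 t x, ?_⟩
  -- Part 2
  intro ε hε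
  obtain ⟨hε0, hε1⟩ := hε
  set t0 : ℕ := ⌈(Real.log D - Real.log ε) / δ⌉₊ with ht0
  refine Nat.sInf_le ?_
  show ∀ x : Ω, (1 / 2) * ∑ y, |(P ^ t0) x y - π y| ≤ ε
  intro x
  refine le_trans (part1 t0 x) ?_
  by_cases hD1 : 1 ≤ D
  · have hDpos : 0 < D := lt_of_lt_of_le one_pos hD1
    have hexp : (1 - δ) ≤ Real.exp (-δ) := by
      have := Real.add_one_le_exp (-δ); linarith
    have hpow : (1 - δ) ^ t0 ≤ Real.exp (-δ * t0) := by
      calc (1 - δ) ^ t0 ≤ (Real.exp (-δ)) ^ t0 := pow_le_pow_left₀ h1δ hexp t0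
        _ = Real.exp (-δ * t0) := by rw [← Real.exp_nat_mul, mul_comm]
    have hceil : (Real.log D - Real.log ε) / δ ≤ (t0 : ℝ) := Nat.le_ceil _
    have h2 : -δ * t0 ≤ Real.log ε - Real.log D := by
      rw [div_le_iff₀ hδ0] at hceil
      linarith
    calc (1 - δ) ^ t0 * D ≤ Real.exp (Real.log ε - Real.log D) * D := by
          refine mul_le_mul_of_nonneg_right (le_trans hpow ?_) hD0
          exact Real.exp_le_exp.mpr h2
      _ = ε / D * D := by rw [Real.exp_sub, Real.exp_log hε0, Real.exp_log hDpos]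
      _ = ε := div_mul_cancel₀ ε (ne_of_gt hDpos)
  · have hall : ∀ x y : Ω, d x y = 0 := by
      intro x y
      by_contra hne
      refine hD1 (le_trans (hd_one x y ?_) (hbdd x y))
      intro h; exact hne (h ▸ hd_self x)
    have hDz : D = 0 := by
      rw [hD]
      simp only [hall, ciSup_const]
    rw [hDz, mul_zero]
    exact le_of_lt hε0
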